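/- Let z1, z2 be real numbers with z1 < 0 and z2 < 0, and let s1, s2 be real numbers with s2 > s1 ≥ 1. Then ((1 − z1/s1)(1 − z2/s1))^{−s1} > ((1 − z1/s2)(1 − z2/s2))^{−s2}. In particular, for every real s ≥ 1, ((1 − z1/s)(1 − z2/s))^{−s} ≤ 1/((1 − z1)(1 − z2)). -/

import Mathlib

lemma FIE_aux_pos {z s : ℝ} (hz : z < 0) (hs : (1:ℝ) ≤ s) : 0 < 1 - z / s := by
  have hs0 : (0:ℝ) < s := lt_of_lt_of_le one_pos hs
  have : z / s < 0 := div_neg_of_neg_of_pos hz hs0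
  linarith

lemma FIE_aux_mono {z : ℝ} (hz : z < 0) :
    StrictMonoOn (fun s : ℝ => s * Real.log (1 - z / s)) (Set.Ici 1) := by
  apply strictMonoOn_of_deriv_pos (convex_Ici 1)
  · apply ContinuousOn.mul continuousOn_id
    apply ContinuousOn.log
    · apply ContinuousOn.sub continuousOn_const
      exact ContinuousOn.div continuousOn_const continuousOn_id
        (fun x hx => by simp only [Set.mem_Ici] at hx; positivity)
    · intro x hx
      simp only [Set.mem_Ici] at hx
      exact ne_of_gt (FIE_aux_pos hz hx)
  · intro x hx
    rw [interior_Ici] at hx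
    have hx1 : (1:ℝ) < x := hx
    have hx0 : (0:ℝ) < x := lt_trans one_pos hx1
    have ha : 0 < 1 - z / x := FIE_aux_pos hz hx1.le
    have ha1 : 1 < 1 - z / x := by
      have : z / x < 0 := div_neg_of_neg_of_pos hz hx0
      linarith
    -- derivative computation
    have hd1 : HasDerivAt (fun s : ℝ => 1 - z / s) (z / x ^ 2) x := by
      have : HasDerivAt (fun s : ℝ => z / s) (-(z / x ^ 2)) x := by
        have h := (hasDerivAt_inv (ne_of_gt hx0)).const_mul z
        simpa [div_eq_mul_inv, neg_div] using h
      simpa using (this.const_sub 1)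
    have hd2 : HasDerivAt (fun s : ℝ => Real.log (1 - z / s))
        ((1 - z / x)⁻¹ * (z / x ^ 2)) x :=
      ((Real.hasDerivAt_log (ne_of_gt ha)).comp x hd1 :)
    have hd3 : HasDerivAt (fun s : ℝ => s * Real.log (1 - z / s))
        (1 * Real.log (1 - z / x) + x * ((1 - z / x)⁻¹ * (z / x ^ 2))) x :=
      (hasDerivAt_id x).mul hd2
    rw [hd3.deriv]
    -- show positivity of the derivative
    have hxz : (0:ℝ) < x - z := by linarith
    have hinv : x * ((1 - z / x)⁻¹ * (z / x ^ 2)) = (1 - z / x)⁻¹ - 1 := by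
      have hax : 1 - z / x = (x - z) / x := by field_simp
      rw [hax, inv_div]
      field_simp
      ring
    rw [one_mul, hinv]
    have hlog : Real.log ((1 - z / x)⁻¹) < (1 - z / x)⁻¹ - 1 :=
      Real.log_lt_sub_one_of_pos (by positivity) (ne_of_lt (inv_lt_one_of_one_lt₀ ha1))
    rw [Real.log_inv] at hlog
    linarith

/-- Strict monotone decrease of `s ↦ ((1 - z1/s)(1 - z2/s))^(-s)` and the consequent
bound by the FIE stability function. -/
theorem FIE_power_strict_decrease_and_bound
    (z1 z2 : ℝ) (h1 : z1 < 0) (h2 : z2 < 0) :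
    (∀ s1 s2 : ℝ, 1 ≤ s1 → s1 < s2 →
      ((1 - z1 / s2) * (1 - z2 / s2)) ^ (-s2) <
        ((1 - z1 / s1) * (1 - z2 / s1)) ^ (-s1)) ∧
    (∀ s : ℝ, 1 ≤ s →
      ((1 - z1 / s) * (1 - z2 / s)) ^ (-s) ≤ 1 / ((1 - z1) * (1 - z2))) := by
  have part1 : ∀ s1 s2 : ℝ, 1 ≤ s1 → s1 < s2 →
      ((1 - z1 / s2) * (1 - z2 / s2)) ^ (-s2) <
        ((1 - z1 / s1) * (1 - z2 / s1)) ^ (-s1) := by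
    intro s1 s2 hs1 hlt
    have hs2 : (1:ℝ) ≤ s2 := le_of_lt (lt_of_le_of_lt hs1 hlt)
    have a1 := FIE_aux_pos h1 hs1
    have a2 := FIE_aux_pos h2 hs1
    have b1 := FIE_aux_pos h1 hs2
    have b2 := FIE_aux_pos h2 hs2
    rw [Real.rpow_def_of_pos (mul_pos b1 b2), Real.rpow_def_of_pos (mul_pos a1 a2)]
    apply Real.exp_lt_exp.2
    rw [Real.log_mul (ne_of_gt b1) (ne_of_gt b2), Real.log_mul (ne_of_gt a1) (ne_of_gt a2)]
    have k1 := FIE_aux_mono h1 (Set.mem_Ici.2 hs1) (Set.mem_Ici.2 hs2) hlt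
    have k2 := FIE_aux_mono h2 (Set.mem_Ici.2 hs1) (Set.mem_Ici.2 hs2) hlt
    simp only at k1 k2
    nlinarith [k1, k2]
  refine ⟨part1, ?_⟩
  intro s hs
  have base : ((1 - z1 / 1) * (1 - z2 / 1)) ^ (-(1:ℝ)) = 1 / ((1 - z1) * (1 - z2)) := by
    rw [Real.rpow_neg_one]
    simp [one_div]
  rcases eq_or_lt_of_le hs with heq | hlt
  · subst heq
    exact le_of_eq base
  · have := part1 1 s le_rfl hlt
    rw [base] at this
    exact le_of_lt this
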